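/- Let (γ_n)_{n≥0} be positive reals with inf_n γ_n > 0 and (a_n)_{n≥0} nonnegative reals, not all zero, with Σ_n a_n/γ_n > ρ₀ > 0, and let τ > Σ_n a_n/γ_n². For k₁, k₂ > 0 define F*(λ) := ρ₀ − 2k₁ − τλ − Σ_n a_n/(γ_n + 2k₂ + λ) for complex λ with Re λ ≥ 0, and for k₁ ∈ (0,ρ₀/2) let ξ(k₁) > 0 be the unique solution of Σ_n a_n/(γ_n + 2ξ(k₁)) = ρ₀ − 2k₁. Then: (1) if 0 < k₁ < ρ₀/2 and 0 < k₂ < ξ(k₁), F* has no zero with Re λ ≥ 0; if k₂ > ξ(k₁), F* has exactly one zero with Re λ ≥ 0 and it is a positive real number; if k₂ = ξ(k₁), λ = 0 is a zero of F*; (2) if k₁ > ρ₀/2, then F* has no zero with Re λ ≥ 0, for every k₂ > 0. -/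

import Mathlib

private lemma slep_shift_summable {γ a : ℕ → ℝ} {c : ℝ} (hc : 0 < c) (hγ : ∀ n, c ≤ γ n)
    (ha : ∀ n, 0 ≤ a n) (hsum : Summable fun n => a n / γ n) {t : ℝ} (ht : 0 ≤ t) :
    Summable fun n => a n / (γ n + t) := by
  refine Summable.of_nonneg_of_le (fun n => ?_) (fun n => ?_) hsum
  · have h := hc.trans_le (hγ n)
    exact div_nonneg (ha n) (by linarith)
  · have h := hc.trans_le (hγ n)
    exact div_le_div_of_nonneg_left (ha n) h (by linarith)

private lemma slep_sq_summable {γ a : ℕ → ℝ} {c : ℝ} (hc : 0 < c) (hγ : ∀ n, c ≤ γ n)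
    (ha : ∀ n, 0 ≤ a n) (hsum : Summable fun n => a n / γ n) :
    Summable fun n => a n / (γ n) ^ 2 := by
  refine Summable.of_nonneg_of_le (fun n => ?_) (fun n => ?_) (hsum.mul_right (1 / c))
  · have h := hc.trans_le (hγ n)
    exact div_nonneg (ha n) (by positivity)
  · have h := hc.trans_le (hγ n)
    have e : a n / γ n * (1 / γ n) = a n / γ n ^ 2 := by
      rw [div_mul_div_comm, mul_one, sq]
    rw [← e]
    exact mul_le_mul_of_nonneg_left (by
      apply div_le_div_of_nonneg_left zero_le_one hc (hγ n)) (div_nonneg (ha n) h.le)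

private lemma slep_Santi {γ a : ℕ → ℝ} {c : ℝ} (hc : 0 < c) (hγ : ∀ n, c ≤ γ n)
    (ha : ∀ n, 0 ≤ a n) (hne : ∃ n, a n ≠ 0) (hsum : Summable fun n => a n / γ n)
    {t₁ t₂ : ℝ} (h1 : 0 ≤ t₁) (h12 : t₁ < t₂) :
    (∑' n, a n / (γ n + t₂)) < ∑' n, a n / (γ n + t₁) := by
  obtain ⟨n0, hn0⟩ := hne
  have ha0 : 0 < a n0 := lt_of_le_of_ne (ha n0) (Ne.symm hn0)
  refine Summable.tsum_lt_tsum (i := n0) (fun n => ?_) ?_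
    (slep_shift_summable hc hγ ha hsum (by linarith))
    (slep_shift_summable hc hγ ha hsum h1)
  · have h := hc.trans_le (hγ n)
    exact div_le_div_of_nonneg_left (ha n) (by linarith) (by linarith)
  · have h := hc.trans_le (hγ n0)
    exact div_lt_div_of_pos_left ha0 (by linarith) (by linarith)

private lemma slep_Sdiff {γ a : ℕ → ℝ} {c : ℝ} (hc : 0 < c) (hγ : ∀ n, c ≤ γ n)
    (ha : ∀ n, 0 ≤ a n) (hsum : Summable fun n => a n / γ n)
    {t₁ t₂ : ℝ} (h1 : 0 ≤ t₁) (h12 : t₁ ≤ t₂) :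
    (∑' n, a n / (γ n + t₁)) - (∑' n, a n / (γ n + t₂))
      ≤ (∑' n, a n / (γ n) ^ 2) * (t₂ - t₁) := by
  have hS1 := slep_shift_summable hc hγ ha hsum h1
  have hS2 := slep_shift_summable hc hγ ha hsum (h1.trans h12)
  have hT := slep_sq_summable hc hγ ha hsum
  rw [← Summable.tsum_sub hS1 hS2, ← tsum_mul_right]
  refine Summable.tsum_le_tsum (fun n => ?_) (hS1.sub hS2) (hT.mul_right _)
  have h := hc.trans_le (hγ n)
  have e : a n / (γ n + t₁) - a n / (γ n + t₂) = a n * (t₂ - t₁) / ((γ n + t₁) * (γ n + t₂)) := by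
    rw [div_sub_div _ _ (by linarith : γ n + t₁ ≠ 0) (by linarith : γ n + t₂ ≠ 0)]
    ring_nf
  rw [e]
  calc a n * (t₂ - t₁) / ((γ n + t₁) * (γ n + t₂)) ≤ a n * (t₂ - t₁) / (γ n * γ n) :=
        div_le_div_of_nonneg_left (mul_nonneg (ha n) (by linarith)) (by positivity)
          (by nlinarith)
    _ = a n / γ n ^ 2 * (t₂ - t₁) := by rw [sq]; ring

private lemma slep_cnorm {γ : ℕ → ℝ} {c : ℝ} (hc : 0 < c) (hγ : ∀ n, c ≤ γ n)
    {k₂ : ℝ} (hk₂ : 0 ≤ k₂) {l : ℂ} (hl : 0 ≤ l.re) (n : ℕ) :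
    γ n ≤ ‖(γ n : ℂ) + 2 * (k₂ : ℂ) + l‖ := by
  have hre : ((γ n : ℂ) + 2 * (k₂ : ℂ) + l).re = γ n + 2 * k₂ + l.re := by simp
  calc γ n ≤ ((γ n : ℂ) + 2 * (k₂ : ℂ) + l).re := by rw [hre]; linarith
    _ ≤ ‖(γ n : ℂ) + 2 * (k₂ : ℂ) + l‖ := by
        exact Complex.re_le_norm _

private lemma slep_csummable {γ a : ℕ → ℝ} {c : ℝ} (hc : 0 < c) (hγ : ∀ n, c ≤ γ n)
    (ha : ∀ n, 0 ≤ a n) (hsum : Summable fun n => a n / γ n)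
    {k₂ : ℝ} (hk₂ : 0 ≤ k₂) {l : ℂ} (hl : 0 ≤ l.re) :
    Summable fun n => (a n : ℂ) / ((γ n : ℂ) + 2 * (k₂ : ℂ) + l) := by
  apply Summable.of_norm
  refine Summable.of_nonneg_of_le (fun n => norm_nonneg _) (fun n => ?_) hsum
  have h := hc.trans_le (hγ n)
  rw [norm_div, Complex.norm_real, Real.norm_of_nonneg (ha n)]
  exact div_le_div_of_nonneg_left (ha n) h (slep_cnorm hc hγ hk₂ hl n)

private lemma slep_normSq {γ : ℕ → ℝ} {c : ℝ} (hc : 0 < c) (hγ : ∀ n, c ≤ γ n)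
    {k₂ : ℝ} (hk₂ : 0 ≤ k₂) {l : ℂ} (hl : 0 ≤ l.re) (n : ℕ) :
    (γ n) ^ 2 ≤ Complex.normSq ((γ n : ℂ) + 2 * (k₂ : ℂ) + l) := by
  have h := hc.trans_le (hγ n)
  rw [Complex.normSq_eq_norm_sq]
  exact pow_le_pow_left₀ h.le (slep_cnorm hc hγ hk₂ hl n) 2

private lemma slep_cast {γ a : ℕ → ℝ} {c : ℝ} (hc : 0 < c) (hγ : ∀ n, c ≤ γ n)
    (ha : ∀ n, 0 ≤ a n) (hsum : Summable fun n => a n / γ n)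
    (ρ₀ k₁ τ : ℝ) {k₂ x : ℝ} (hk₂ : 0 ≤ k₂) (hx : 0 ≤ x) :
    (ρ₀ : ℂ) - 2 * k₁ - τ * (x : ℂ) - ∑' n, (a n : ℂ) / ((γ n : ℂ) + 2 * k₂ + (x : ℂ))
      = ((ρ₀ - 2 * k₁ - τ * x - ∑' n, a n / (γ n + 2 * k₂ + x) : ℝ) : ℂ) := by
  have hs : Summable fun n => a n / (γ n + 2 * k₂ + x) := by
    have := slep_shift_summable hc hγ ha hsum (t := 2 * k₂ + x) (by linarith)
    simpa [← add_assoc] using this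
  have h1 : ∑' n, (a n : ℂ) / ((γ n : ℂ) + 2 * k₂ + (x : ℂ))
      = ((∑' n, a n / (γ n + 2 * k₂ + x) : ℝ) : ℂ) := by
    rw [show ((∑' n, a n / (γ n + 2 * k₂ + x) : ℝ) : ℂ)
        = Complex.ofRealCLM (∑' n, a n / (γ n + 2 * k₂ + x)) from rfl,
      Complex.ofRealCLM.map_tsum hs]
    exact tsum_congr fun n => by push_cast [Complex.ofRealCLM_apply]; ring
  rw [h1]; push_cast; ring

private lemma slep_key {γ a : ℕ → ℝ} {c : ℝ} (hc : 0 < c) (hγ : ∀ n, c ≤ γ n)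
    (ha : ∀ n, 0 ≤ a n) (hsum : Summable fun n => a n / γ n)
    {τ : ℝ} (hτ : (∑' n, a n / (γ n) ^ 2) < τ) (ρ₀ k₁ : ℝ) {k₂ : ℝ} (hk₂ : 0 ≤ k₂)
    {l : ℂ} (hl : 0 ≤ l.re)
    (h0 : (ρ₀ : ℂ) - 2 * k₁ - τ * l - ∑' n, (a n : ℂ) / ((γ n : ℂ) + 2 * k₂ + l) = 0) :
    l.im = 0 ∧ ρ₀ - 2 * k₁ - τ * l.re - ∑' n, a n / (γ n + 2 * k₂ + l.re) = 0 := by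
  have hT := slep_sq_summable hc hγ ha hsum
  have hSsum := slep_csummable hc hγ ha hsum hk₂ hl
  have hQsum : Summable fun n => a n / Complex.normSq ((γ n : ℂ) + 2 * (k₂ : ℂ) + l) := by
    refine Summable.of_nonneg_of_le (fun n => ?_) (fun n => ?_) hT
    · exact div_nonneg (ha n) (Complex.normSq_nonneg _)
    · have h := hc.trans_le (hγ n)
      exact div_le_div_of_nonneg_left (ha n) (by positivity) (slep_normSq hc hγ hk₂ hl n)
  have hQle : (∑' n, a n / Complex.normSq ((γ n : ℂ) + 2 * (k₂ : ℂ) + l))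
      ≤ ∑' n, a n / (γ n) ^ 2 := by
    refine Summable.tsum_le_tsum (fun n => ?_) hQsum hT
    have h := hc.trans_le (hγ n)
    exact div_le_div_of_nonneg_left (ha n) (by positivity) (slep_normSq hc hγ hk₂ hl n)
  set Q := ∑' n, a n / Complex.normSq ((γ n : ℂ) + 2 * (k₂ : ℂ) + l) with hQ
  have hSim : (∑' n, (a n : ℂ) / ((γ n : ℂ) + 2 * k₂ + l)).im = -(l.im * Q) := by
    have hm := Complex.imCLM.map_tsum hSsum
    simp only [Complex.imCLM_apply] at hm
    rw [hm]
    have he : ∀ n, ((a n : ℂ) / ((γ n : ℂ) + 2 * k₂ + l)).im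
        = -(l.im * (a n / Complex.normSq ((γ n : ℂ) + 2 * (k₂ : ℂ) + l))) := by
      intro n
      rw [Complex.div_im]
      simp [Complex.add_im, Complex.mul_im]
      ring
    rw [tsum_congr he, tsum_neg, tsum_mul_left]
  have him : -(τ * l.im) - (∑' n, (a n : ℂ) / ((γ n : ℂ) + 2 * k₂ + l)).im = 0 := by
    have := congrArg Complex.im h0
    simpa [Complex.sub_im, Complex.mul_im] using this
  rw [hSim] at him
  have hfac : l.im * (Q - τ) = 0 := by ring_nf; ring_nf at him; linarith
  have him0 : l.im = 0 := by
    rcases mul_eq_zero.mp hfac with h | h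
    · exact h
    · exfalso; have : Q - τ < 0 := by linarith
      linarith
  refine ⟨him0, ?_⟩
  have hlre : l = (l.re : ℂ) := Complex.ext (by simp) (by simp [him0])
  rw [hlre] at h0
  rw [slep_cast hc hγ ha hsum ρ₀ k₁ τ hk₂ hl] at h0
  exact_mod_cast h0

private lemma slep_S_re_nonneg {γ a : ℕ → ℝ} {c : ℝ} (hc : 0 < c) (hγ : ∀ n, c ≤ γ n)
    (ha : ∀ n, 0 ≤ a n) (hsum : Summable fun n => a n / γ n)
    {k₂ : ℝ} (hk₂ : 0 ≤ k₂) {l : ℂ} (hl : 0 ≤ l.re) :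
    0 ≤ (∑' n, (a n : ℂ) / ((γ n : ℂ) + 2 * k₂ + l)).re := by
  have hSsum := slep_csummable hc hγ ha hsum hk₂ hl
  have hm := Complex.reCLM.map_tsum hSsum
  simp only [Complex.reCLM_apply] at hm
  rw [hm]
  refine tsum_nonneg fun n => ?_
  have h := hc.trans_le (hγ n)
  have hre : ((γ n : ℂ) + 2 * (k₂ : ℂ) + l).re = γ n + 2 * k₂ + l.re := by simp
  rw [Complex.div_re]
  simp only [Complex.ofReal_re, Complex.ofReal_im, zero_mul, zero_div, add_zero, hre]
  exact div_nonneg (mul_nonneg (ha n) (by linarith)) (Complex.normSq_nonneg _)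

theorem stmt_8 (γ a : ℕ → ℝ) (c : ℝ) (hc : 0 < c) (hγ : ∀ n, c ≤ γ n)
    (ha : ∀ n, 0 ≤ a n) (hne : ∃ n, a n ≠ 0)
    (hsum : Summable fun n => a n / γ n)
    (ρ₀ τ : ℝ) (hρ : 0 < ρ₀) (hbig : ρ₀ < ∑' n, a n / γ n)
    (hτ : (∑' n, a n / (γ n) ^ 2) < τ)
    (F : ℝ → ℝ → ℂ → ℂ)
    (hF : ∀ (k₁ k₂ : ℝ) (l : ℂ),
      F k₁ k₂ l = (ρ₀ : ℂ) - 2 * k₁ - τ * l - ∑' n, (a n : ℂ) / ((γ n : ℂ) + 2 * k₂ + l))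
    (ξ : ℝ → ℝ)
    (hξ : ∀ k₁ ∈ Set.Ioo 0 (ρ₀ / 2),
      0 < ξ k₁ ∧ (∑' n, a n / (γ n + 2 * ξ k₁)) = ρ₀ - 2 * k₁) :
    (∀ k₁ ∈ Set.Ioo 0 (ρ₀ / 2),
      (∀ k₂ : ℝ, 0 < k₂ → k₂ < ξ k₁ → ∀ l : ℂ, 0 ≤ l.re → F k₁ k₂ l ≠ 0) ∧
      (∀ k₂ : ℝ, ξ k₁ < k₂ →
        (∃! l : ℂ, 0 ≤ l.re ∧ F k₁ k₂ l = 0) ∧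
        (∀ l : ℂ, 0 ≤ l.re → F k₁ k₂ l = 0 → l.im = 0 ∧ 0 < l.re)) ∧
      F k₁ (ξ k₁) 0 = 0) ∧
    (∀ k₁ : ℝ, ρ₀ / 2 < k₁ → ∀ k₂ : ℝ, 0 < k₂ → ∀ l : ℂ, 0 ≤ l.re → F k₁ k₂ l ≠ 0) := by
  obtain ⟨n0, hn0⟩ := hne
  have ha0 : 0 < a n0 := lt_of_le_of_ne (ha n0) (Ne.symm hn0)
  have hγ0 : ∀ n, 0 < γ n := fun n => hc.trans_le (hγ n)
  have hT := slep_sq_summable hc hγ ha hsum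
  have hTpos : 0 < ∑' n, a n / (γ n) ^ 2 := by
    refine Summable.tsum_pos hT (fun n => div_nonneg (ha n) (sq_nonneg _)) n0 ?_
    have := hγ0 n0; positivity
  have hτpos : 0 < τ := hTpos.trans hτ
  -- shape rewriting
  have hshape : ∀ t x : ℝ, (∑' n, a n / (γ n + t + x)) = ∑' n, a n / (γ n + (t + x)) :=
    fun t x => tsum_congr fun n => by rw [add_assoc]
  constructor
  · intro k₁ hk₁
    obtain ⟨hk₁pos, hk₁lt⟩ := hk₁
    obtain ⟨hξpos, hξeq⟩ := hξ k₁ ⟨hk₁pos, hk₁lt⟩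
    -- monotonicity helper: if 0 ≤ x₁ < x₂ then g x₂ < g x₁ (any k₂ ≥ 0)
    have hmono : ∀ (k₂ : ℝ), 0 ≤ k₂ → ∀ x₁ x₂ : ℝ, 0 ≤ x₁ → x₁ < x₂ →
        ρ₀ - 2 * k₁ - τ * x₂ - (∑' n, a n / (γ n + 2 * k₂ + x₂))
          < ρ₀ - 2 * k₁ - τ * x₁ - (∑' n, a n / (γ n + 2 * k₂ + x₁)) := by
      intro k₂ hk₂ x₁ x₂ hx₁ h12
      rw [hshape, hshape]
      have hd := slep_Sdiff hc hγ ha hsum (t₁ := 2 * k₂ + x₁) (t₂ := 2 * k₂ + x₂)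
        (by linarith) (by linarith)
      have hmul : (∑' n, a n / (γ n) ^ 2) * (2 * k₂ + x₂ - (2 * k₂ + x₁))
          < τ * (x₂ - x₁) := by
        have : (2 * k₂ + x₂ - (2 * k₂ + x₁)) = x₂ - x₁ := by ring
        rw [this]
        exact mul_lt_mul_of_pos_right hτ (by linarith)
      linarith
    refine ⟨?_, ?_, ?_⟩
    · -- below the curve: no zeros
      intro k₂ hk₂pos hk₂lt l hl hFz
      rw [hF] at hFz
      obtain ⟨him, hreal⟩ := slep_key hc hγ ha hsum hτ ρ₀ k₁ hk₂pos.le hl hFz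
      rw [hshape] at hreal
      have f1 : (∑' n, a n / (γ n + 2 * ξ k₁)) < ∑' n, a n / (γ n + 2 * k₂) :=
        slep_Santi hc hγ ha ⟨n0, hn0⟩ hsum (by linarith) (by linarith)
      have f2 : (∑' n, a n / (γ n + 2 * k₂)) - (∑' n, a n / (γ n + (2 * k₂ + l.re)))
          ≤ (∑' n, a n / (γ n) ^ 2) * (2 * k₂ + l.re - 2 * k₂) := by
        have := slep_Sdiff hc hγ ha hsum (t₁ := 2 * k₂) (t₂ := 2 * k₂ + l.re)
          (by linarith) (by linarith)
        simpa using this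
      have f3 : (∑' n, a n / (γ n) ^ 2) * (2 * k₂ + l.re - 2 * k₂) ≤ τ * l.re := by
        have h1 : (2 * k₂ + l.re - 2 * k₂) = l.re := by ring
        rw [h1]
        exact mul_le_mul_of_nonneg_right hτ.le hl
      linarith
    · -- above the curve
      intro k₂ hk₂gt
      have hk₂pos : 0 < k₂ := hξpos.trans hk₂gt
      have g0pos : 0 < ρ₀ - 2 * k₁ - ∑' n, a n / (γ n + 2 * k₂) := by
        have f1 : (∑' n, a n / (γ n + 2 * k₂)) < ∑' n, a n / (γ n + 2 * ξ k₁) :=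
          slep_Santi hc hγ ha ⟨n0, hn0⟩ hsum (by linarith) (by linarith)
        linarith
      -- zeros are real and positive
      have hchar : ∀ l : ℂ, 0 ≤ l.re → F k₁ k₂ l = 0 → l.im = 0 ∧ 0 < l.re := by
        intro l hl hFz
        rw [hF] at hFz
        obtain ⟨him, hreal⟩ := slep_key hc hγ ha hsum hτ ρ₀ k₁ hk₂pos.le hl hFz
        refine ⟨him, lt_of_le_of_ne hl ?_⟩
        intro h0
        rw [← h0] at hreal
        simp only [mul_zero, add_zero] at hreal
        linarith
      -- existence via IVT
      have contS : Continuous fun x : ℝ => ∑' n, a n / (γ n + 2 * k₂ + max x 0) := by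
        refine continuous_tsum (fun n => ?_) hsum (fun n x => ?_)
        · refine continuous_const.div
            (continuous_const.add (continuous_id.max continuous_const)) (fun x => ?_)
          have := hγ0 n
          have h2 := le_max_right x 0
          intro hzero; nlinarith
        · have h := hγ0 n
          have h2 := le_max_right x 0
          rw [Real.norm_eq_abs, abs_of_nonneg (div_nonneg (ha n) (by linarith))]
          exact div_le_div_of_nonneg_left (ha n) h (by linarith)
      have contG : Continuous fun x : ℝ =>
          ρ₀ - 2 * k₁ - τ * x - ∑' n, a n / (γ n + 2 * k₂ + max x 0) :=
        ((continuous_const.sub (continuous_const.mul continuous_id)).sub contS)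
      set b : ℝ := ρ₀ / τ + 1 with hb
      have hbpos : 0 < b := by positivity
      have hG0 : 0 ≤ ρ₀ - 2 * k₁ - τ * 0 - ∑' n, a n / (γ n + 2 * k₂ + max (0:ℝ) 0) := by
        simp only [mul_zero, sub_zero, max_self, add_zero]
        linarith
      have hGb : ρ₀ - 2 * k₁ - τ * b - (∑' n, a n / (γ n + 2 * k₂ + max b 0)) ≤ 0 := by
        have hsnn : 0 ≤ ∑' n, a n / (γ n + 2 * k₂ + max b 0) := by
          refine tsum_nonneg fun n => div_nonneg (ha n) ?_
          have := hγ0 n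
          have := le_max_right b 0
          linarith
        have hτb : τ * b = ρ₀ + τ := by
          rw [hb, mul_add, mul_one, mul_div_assoc', mul_comm τ ρ₀, mul_div_assoc, div_self hτpos.ne', mul_one]
        rw [hτb]
        linarith
      obtain ⟨x, hxmem, hgx0⟩ :=
        intermediate_value_Icc' hbpos.le contG.continuousOn ⟨hGb, hG0⟩
      obtain ⟨hx0, hxb⟩ := hxmem
      have hmax : max x 0 = x := max_eq_left hx0
      have hgx : ρ₀ - 2 * k₁ - τ * x - (∑' n, a n / (γ n + 2 * k₂ + max x 0)) = 0 := hgx0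
      rw [hmax] at hgx
      have hxpos : 0 < x := by
        rcases lt_or_eq_of_le hx0 with h | h
        · exact h
        · exfalso
          rw [← h] at hgx
          simp only [mul_zero, add_zero] at hgx
          linarith
      have hFx : F k₁ k₂ ((x : ℝ) : ℂ) = 0 := by
        rw [hF, slep_cast hc hγ ha hsum ρ₀ k₁ τ hk₂pos.le hx0, hgx]
        simp
      refine ⟨⟨((x : ℝ) : ℂ), ⟨by simp [hx0], hFx⟩, ?_⟩, hchar⟩
      rintro y ⟨hyre, hyz⟩
      obtain ⟨hyim, hypos⟩ := hchar y hyre hyz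
      rw [hF] at hyz
      obtain ⟨_, hyreal⟩ := slep_key hc hγ ha hsum hτ ρ₀ k₁ hk₂pos.le hyre hyz
      have hxy : y.re = x := by
        rcases lt_trichotomy y.re x with h | h | h
        · exfalso
          have := hmono k₂ hk₂pos.le y.re x hyre h
          linarith
        · exact h
        · exfalso
          have := hmono k₂ hk₂pos.le x y.re hx0 h
          linarith
      exact Complex.ext (by simpa using hxy) (by simpa using hyim)
    · -- on the curve
      rw [hF]
      rw [show (0 : ℂ) = ((0 : ℝ) : ℂ) by norm_num]
      rw [slep_cast hc hγ ha hsum ρ₀ k₁ τ hξpos.le le_rfl]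
      rw [Complex.ofReal_inj]
      simp only [add_zero, mul_zero, sub_zero]
      linarith
  · -- k₁ > ρ₀/2 : no zeros
    intro k₁ hk₁ k₂ hk₂ l hl hFz
    rw [hF] at hFz
    have hre := congrArg Complex.re hFz
    have hlhs : ((ρ₀ : ℂ) - 2 * k₁ - τ * l - ∑' n, (a n : ℂ) / ((γ n : ℂ) + 2 * k₂ + l)).re
        = ρ₀ - 2 * k₁ - τ * l.re - (∑' n, (a n : ℂ) / ((γ n : ℂ) + 2 * k₂ + l)).re := by
      simp [Complex.sub_re, Complex.mul_re]
    rw [hlhs] at hre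
    have hS := slep_S_re_nonneg hc hγ ha hsum hk₂.le hl
    have hτl : 0 ≤ τ * l.re := mul_nonneg hτpos.le hl
    simp only [Complex.zero_re] at hre
    linarith
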